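/- Let φ : ℝ² → ℝ³ be an injective linear map, ℓ : ℝ² → ℝ a nonzero linear form, u ∈ ℝ² with ℓ(u) = 1, and w ∈ ker ℓ with w ≠ 0, such that ⟨φ(u), φ(w)⟩ = 0. Set t = φ(u)/‖φ(u)‖ and n = (φ(u) × φ(w))/(‖φ(u)‖·‖φ(w)‖). Let η ≥ 0, set r = √(η + ‖φ(u)‖²), and let θ ∈ ℝ be arbitrary. Define L : ℝ² → ℝ³ by L(v) = φ(v) − ℓ(v)·φ(u) + ℓ(v)·r·(cos θ · t + sin θ · n). Then L is isometric for the bilinear form μ(v,v') = ⟨φ(v), φ(v')⟩ + η·ℓ(v)·ℓ(v'), i.e. ⟨L(v), L(v')⟩ = μ(v,v') for all v, v' ∈ ℝ², and in particular L is injective. -/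

import Mathlib

open scoped RealInnerProductSpace

noncomputable section

abbrev E2 := EuclideanSpace ℝ (Fin 2)
abbrev E3 := EuclideanSpace ℝ (Fin 3)

/-- The cross product of two vectors of Euclidean `ℝ³`. -/
noncomputable def cross (a b : E3) : E3 :=
  (WithLp.equiv 2 (Fin 3 → ℝ)).symm
    ![a 1 * b 2 - a 2 * b 1, a 2 * b 0 - a 0 * b 2, a 0 * b 1 - a 1 * b 0]

lemma cross_inner_left (a b : E3) : ⟪a, cross a b⟫ = 0 := by
  simp [cross, PiLp.inner_apply, Fin.sum_univ_three, RCLike.inner_apply,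
    PiLp.toLp_apply]; ring

lemma cross_inner_right (a b : E3) : ⟪b, cross a b⟫ = 0 := by
  simp [cross, PiLp.inner_apply, Fin.sum_univ_three, RCLike.inner_apply,
    PiLp.toLp_apply]; ring

lemma cross_inner_self (a b : E3) : ⟪cross a b, cross a b⟫ = ⟪a,a⟫ * ⟪b,b⟫ - ⟪a,b⟫^2 := by
  simp only [PiLp.inner_apply]
  simp [cross, PiLp.inner_apply, Fin.sum_univ_three, RCLike.inner_apply,
    PiLp.toLp_apply]; ring

/-- With `r = √(η + ‖φ(u)‖²)`, the target differential `L` of the corrugation process is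
isometric for `μ(v,v') = ⟨φ(v), φ(v')⟩ + η·ℓ(v)·ℓ(v')`; in particular `L` is injective. -/
theorem stmt4 (φ : E2 →ₗ[ℝ] E3) (hφ : Function.Injective φ)
    (ℓ : E2 →ₗ[ℝ] ℝ) (hℓ : ℓ ≠ 0)
    (u : E2) (hu : ℓ u = 1)
    (w : E2) (hw : ℓ w = 0) (hw0 : w ≠ 0)
    (horth : ⟪φ u, φ w⟫ = 0)
    (t n : E3)
    (ht : t = ‖φ u‖⁻¹ • φ u)
    (hn : n = (‖φ u‖ * ‖φ w‖)⁻¹ • cross (φ u) (φ w))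
    (η : ℝ) (hη : 0 ≤ η)
    (r : ℝ) (hr : r = Real.sqrt (η + ‖φ u‖ ^ 2))
    (θ : ℝ)
    (L : E2 → E3)
    (hL : ∀ v : E2,
      L v = φ v - ℓ v • φ u + ℓ v • (r • (Real.cos θ • t + Real.sin θ • n))) :
    (∀ v v' : E2, ⟪L v, L v'⟫ = ⟪φ v, φ v'⟫ + η * (ℓ v * ℓ v')) ∧
      Function.Injective L := by
  have hker0 : φ 0 = 0 := map_zero φ
  have hu0 : φ u ≠ 0 := by
    intro h
    have : u = 0 := hφ (by rw [h, hker0])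
    simp [this] at hu
  have hwφ : φ w ≠ 0 := fun h => hw0 (hφ (by rw [h, hker0]))
  have hnu : ‖φ u‖ ≠ 0 := norm_ne_zero_iff.2 hu0
  have hnw : ‖φ w‖ ≠ 0 := norm_ne_zero_iff.2 hwφ
  have haa : ⟪φ u, φ u⟫ = ‖φ u‖ ^ 2 := real_inner_self_eq_norm_sq _
  have hbb : ⟪φ w, φ w⟫ = ‖φ w‖ ^ 2 := real_inner_self_eq_norm_sq _
  -- inner products involving t and n
  have htt : ⟪t, t⟫ = 1 := by
    rw [ht, real_inner_smul_left, real_inner_smul_right, haa]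
    field_simp
  have hnn : ⟪n, n⟫ = 1 := by
    rw [hn, real_inner_smul_left, real_inner_smul_right, cross_inner_self, haa, hbb, horth]
    field_simp
    ring
  have htn : ⟪t, n⟫ = 0 := by
    rw [ht, hn, real_inner_smul_left, real_inner_smul_right, cross_inner_left]
    ring
  have hbt : ⟪φ w, t⟫ = 0 := by
    rw [ht, real_inner_smul_right, real_inner_comm, horth]; ring
  have hbn : ⟪φ w, n⟫ = 0 := by
    rw [hn, real_inner_smul_right, cross_inner_right]; ring
  have htn' : ⟪n, t⟫ = 0 := by rw [real_inner_comm]; exact htn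
  have hbt' : ⟪t, φ w⟫ = 0 := by rw [real_inner_comm]; exact hbt
  have hbn' : ⟪n, φ w⟫ = 0 := by rw [real_inner_comm]; exact hbn
  have horth' : ⟪φ w, φ u⟫ = 0 := by rw [real_inner_comm]; exact horth
  have hr2 : r ^ 2 = η + ‖φ u‖ ^ 2 := by
    rw [hr, Real.sq_sqrt (by positivity)]
  -- decomposition v = ℓ v • u + c • w
  have hkey : ∀ v : E2, ∃ c : ℝ, v = ℓ v • u + c • w := by
    have hsurj : Function.Surjective ℓ := fun x => ⟨x • u, by simp [hu]⟩
    have hrange : LinearMap.range ℓ = ⊤ := LinearMap.range_eq_top.2 hsurj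
    have hfr : Module.finrank ℝ (LinearMap.ker ℓ) = 1 := by
      have h := ℓ.finrank_range_add_finrank_ker
      rw [hrange] at h
      simp only [finrank_top, finrank_euclideanSpace_fin, Module.finrank_self] at h
      omega
    have hspan : LinearMap.ker ℓ = Submodule.span ℝ {w} := by
      refine (Submodule.eq_of_le_of_finrank_le (Submodule.span_le.2 ?_) ?_).symm
      · intro x hx; simp at hx; simp [hx, hw]
      · rw [hfr, finrank_span_singleton hw0]
    intro v
    have hv : v - ℓ v • u ∈ LinearMap.ker ℓ := by simp [hu]
    rw [hspan, Submodule.mem_span_singleton] at hv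
    obtain ⟨c, hc⟩ := hv
    exact ⟨c, by rw [hc]; abel⟩
  -- the main computation on basis decompositions
  have hmain : ∀ v v' : E2, ⟪L v, L v'⟫ = ⟪φ v, φ v'⟫ + η * (ℓ v * ℓ v') := by
    intro v v'
    obtain ⟨c, hc⟩ := hkey v
    obtain ⟨c', hc'⟩ := hkey v'
    have hLv : L v = c • φ w + (ℓ v * r) • (Real.cos θ • t + Real.sin θ • n) := by
      rw [hL v]
      nth_rewrite 1 [hc]
      rw [map_add, map_smul, map_smul, mul_smul]
      abel
    have hφv : φ v = ℓ v • φ u + c • φ w := by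
      nth_rewrite 1 [hc]; rw [map_add, map_smul, map_smul]
    have hLv' : L v' = c' • φ w + (ℓ v' * r) • (Real.cos θ • t + Real.sin θ • n) := by
      rw [hL v']
      nth_rewrite 1 [hc']
      rw [map_add, map_smul, map_smul, mul_smul]
      abel
    have hφv' : φ v' = ℓ v' • φ u + c' • φ w := by
      nth_rewrite 1 [hc']; rw [map_add, map_smul, map_smul]
    rw [hLv, hLv', hφv, hφv']
    simp only [inner_add_left, inner_add_right, real_inner_smul_left, real_inner_smul_right]
    simp only [htt, hnn, htn, htn', hbt, hbt', hbn, hbn', haa, hbb, horth, horth']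
    have hcs : Real.cos θ ^ 2 + Real.sin θ ^ 2 = 1 := by
      rw [add_comm]; exact Real.sin_sq_add_cos_sq θ
    linear_combination (ℓ v * ℓ v' * r ^ 2) * hcs + (ℓ v * ℓ v') * hr2
  refine ⟨hmain, ?_⟩
  -- injectivity
  intro v v' h
  have hsub : L v - L v' = L (v - v') := by
    rw [hL v, hL v', hL (v - v'), map_sub, map_sub, sub_smul, sub_smul]
    abel
  have h0 : L (v - v') = 0 := by rw [← hsub, h, sub_self]
  have h1 : ⟪φ (v - v'), φ (v - v')⟫ + η * (ℓ (v - v') * ℓ (v - v')) = 0 := by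
    rw [← hmain, h0, inner_zero_left]
  have h2 : (0:ℝ) ≤ ⟪φ (v - v'), φ (v - v')⟫ := real_inner_self_nonneg
  have h3 : (0:ℝ) ≤ η * (ℓ (v - v') * ℓ (v - v')) := mul_nonneg hη (mul_self_nonneg _)
  have h4 : ⟪φ (v - v'), φ (v - v')⟫ = 0 := by linarith
  have h5 : φ (v - v') = 0 := by
    rwa [real_inner_self_eq_norm_sq, pow_eq_zero_iff (by norm_num), norm_eq_zero] at h4
  have := hφ (h5.trans hker0.symm)
  exact sub_eq_zero.1 this
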